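/- Let r ≥ 1, N ≥ 2, and let A_1,…,A_N : U → M_r(ℂ) be holomorphic on a connected open set U ⊆ ℂ^N all of whose points have pairwise distinct coordinates, satisfying the Schlesinger equation. Then for every i, every t ∈ U, every λ ∈ ℂ \ {t_1,…,t_N} and every μ ∈ ℂ such that M(λ,t) − μ I is invertible, the characteristic polynomial of M varies according to ∂/∂t_i [det(M(λ,t) − μ I)] = det(M(λ,t) − μ I) · Tr( A_i(t) (λ − t_i)^{-2} (M(λ,t) − μ I)^{-1} ), where the t_i-derivative is taken with λ and μ held fixed. -/

import Mathlib

open Matrix Finset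
attribute [local instance] Matrix.normedAddCommGroup Matrix.normedSpace

noncomputable def detCM (r : ℕ) : ContinuousMultilinearMap ℂ (fun _ : Fin r => Fin r → ℂ) ℂ :=
  MultilinearMap.mkContinuous
    (Matrix.detRowAlternating (R := ℂ) (n := Fin r)).toMultilinearMap
    (Nat.factorial r : ℝ) (by
      intro m
      have h1 : Matrix.detRowAlternating (R := ℂ) (n := Fin r) (Matrix.of m) =
          ∑ σ : Equiv.Perm (Fin r), Equiv.Perm.sign σ • ∏ i, m (σ i) i := by
        rw [show Matrix.detRowAlternating (R := ℂ) (n := Fin r) (Matrix.of m)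
            = (Matrix.of m).det from rfl, Matrix.det_apply]
        rfl
      have : (Matrix.detRowAlternating (R := ℂ) (n := Fin r)).toMultilinearMap m
          = ∑ σ : Equiv.Perm (Fin r), Equiv.Perm.sign σ • ∏ i, m (σ i) i := h1
      rw [this]
      calc ‖∑ σ : Equiv.Perm (Fin r), Equiv.Perm.sign σ • ∏ i, m (σ i) i‖
          ≤ ∑ σ : Equiv.Perm (Fin r), ‖Equiv.Perm.sign σ • ∏ i, m (σ i) i‖ :=
            norm_sum_le _ _
        _ ≤ ∑ σ : Equiv.Perm (Fin r), ∏ i, ‖m i‖ := by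
            refine Finset.sum_le_sum fun σ _ => ?_
            have hs : ‖Equiv.Perm.sign σ • ∏ i, m (σ i) i‖ = ‖∏ i, m (σ i) i‖ := by
              rcases Int.units_eq_one_or (Equiv.Perm.sign σ) with h | h <;> simp [h]
            rw [hs]
            calc ‖∏ i, m (σ i) i‖ ≤ ∏ i, ‖m (σ i) i‖ := norm_prod_le _ _
              _ ≤ ∏ i, ‖m (σ i)‖ := Finset.prod_le_prod (fun _ _ => norm_nonneg _)
                  (fun i _ => norm_le_pi_norm (m (σ i)) i)
              _ = ∏ i, ‖m i‖ := Equiv.prod_comp σ (fun k => ‖m k‖)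
        _ = (Nat.factorial r : ℝ) * ∏ i, ‖m i‖ := by
            rw [Finset.sum_const, Finset.card_univ, Fintype.card_perm, Fintype.card_fin,
              nsmul_eq_mul]
      )

lemma detCM_apply (r : ℕ) (X : Matrix (Fin r) (Fin r) ℂ) : detCM r X = X.det := by
  simp only [detCM, MultilinearMap.coe_mkContinuous]
  rfl

lemma sum_det_updateRow {r : ℕ} (B H : Matrix (Fin r) (Fin r) ℂ) :
    ∑ i, (B.updateRow i (H i)).det = Matrix.trace (B.adjugate * H) := by
  have key : ∀ i, (B.updateRow i (H i)).det = ∑ j, H i j * B.adjugate j i := by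
    intro i
    rw [Matrix.det_eq_sum_mul_adjugate_row _ i]
    refine Finset.sum_congr rfl fun j _ => ?_
    rw [Matrix.updateRow_self]
    congr 1
    rw [Matrix.adjugate_apply, Matrix.adjugate_apply, show ((B.updateRow i (H i)).updateRow i (Pi.single j 1)) = (B.updateRow i (Pi.single j 1)) from congrArg Matrix.of (Function.update_idem ..)]
  simp_rw [key, Matrix.trace, Matrix.diag, Matrix.mul_apply]
  rw [Finset.sum_comm]
  exact Finset.sum_congr rfl fun j _ => Finset.sum_congr rfl fun i _ => mul_comm _ _

lemma hasFDerivAt_det' {r : ℕ} (B : Matrix (Fin r) (Fin r) ℂ) :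
    HasFDerivAt (fun X : Matrix (Fin r) (Fin r) ℂ => X.det) ((detCM r).linearDeriv B) B := by
  have h := (detCM r).hasFDerivAt (x := B)
  have he : (fun X : Matrix (Fin r) (Fin r) ℂ => X.det) = ⇑(detCM r) := by
    funext X; exact (detCM_apply r X).symm
  rw [he]; exact h

lemma fderiv_det_comp {E : Type} [NormedAddCommGroup E] [NormedSpace ℂ E] {r : ℕ}
    {f : E → Matrix (Fin r) (Fin r) ℂ} {f' : E →L[ℂ] Matrix (Fin r) (Fin r) ℂ} {x : E}
    (hf : HasFDerivAt f f' x) (v : E) :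
    fderiv ℂ (fun s => (f s).det) x v = Matrix.trace ((f x).adjugate * f' v) := by
  have h := (hasFDerivAt_det' (f x)).comp x hf
  rw [show (fun s => (f s).det) = (fun X : Matrix (Fin r) (Fin r) ℂ => X.det) ∘ f from rfl,
    h.fderiv]
  show ((detCM r).linearDeriv (f x)) (f' v) = _
  have h2 : ((detCM r).linearDeriv (f x)) (f' v)
      = ∑ i, detCM r (Function.update (f x) i (f' v i)) :=
    ContinuousMultilinearMap.linearDeriv_apply ..
  refine h2.trans ?_
  rw [← sum_det_updateRow (f x) (f' v)]
  exact Finset.sum_congr rfl fun i _ => detCM_apply r _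


lemma final_trace {r : ℕ} (B Ai : Matrix (Fin r) (Fin r) ℂ) (hdet : IsUnit B.det) (a c : ℂ) :
    Matrix.trace (B.adjugate * (a • (B * Ai - Ai * B) + c • Ai))
      = B.det * Matrix.trace ((c • Ai) * B⁻¹) := by
  have hadj : B.adjugate = B.det • B⁻¹ := by
    rw [Matrix.inv_def, smul_smul, Ring.mul_inverse_cancel _ hdet, one_smul]
  have h0 : Matrix.trace (B.adjugate * (B * Ai - Ai * B)) = 0 := by
    rw [mul_sub, Matrix.trace_sub, ← mul_assoc, Matrix.adjugate_mul, ← mul_assoc,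
      Matrix.trace_mul_cycle, Matrix.mul_adjugate, smul_mul_assoc, one_mul, sub_self]
  rw [mul_add, Matrix.trace_add, mul_smul_comm, mul_smul_comm, Matrix.trace_smul,
    Matrix.trace_smul, h0, smul_zero, zero_add, hadj, smul_mul_assoc, Matrix.trace_smul,
    smul_mul_assoc, Matrix.trace_smul, Matrix.trace_mul_comm]
  simp only [smul_eq_mul]
  ring

set_option maxHeartbeats 2000000 in
theorem schlesinger_charpoly_variation
    (r N : ℕ) (hr : 1 ≤ r) (hN : 2 ≤ N)
    (U : Set (Fin N → ℂ)) (hUo : IsOpen U) (hUc : IsConnected U)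
    (hUd : ∀ t ∈ U, ∀ i j : Fin N, i ≠ j → t i ≠ t j)
    (A : Fin N → (Fin N → ℂ) → Matrix (Fin r) (Fin r) ℂ)
    (hA : ∀ i, DifferentiableOn ℂ (A i) U)
    (hSch : ∀ i j : Fin N, ∀ t ∈ U,
        (i ≠ j → fderiv ℂ (A i) t (Pi.single j 1)
            = (t i - t j)⁻¹ • ⁅A i t, A j t⁆) ∧
        fderiv ℂ (A i) t (Pi.single i 1)
            = -∑ k ∈ Finset.univ.erase i, (t i - t k)⁻¹ • ⁅A i t, A k t⁆) :
    ∀ i : Fin N, ∀ t ∈ U, ∀ z : ℂ, (∀ k : Fin N, z ≠ t k) → ∀ μ : ℂ,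
      IsUnit (∑ k, (z - t k)⁻¹ • A k t - μ • (1 : Matrix (Fin r) (Fin r) ℂ)) →
      fderiv ℂ
          (fun s => (∑ k, (z - s k)⁻¹ • A k s - μ • (1 : Matrix (Fin r) (Fin r) ℂ)).det)
          t (Pi.single i 1)
        = (∑ k, (z - t k)⁻¹ • A k t - μ • (1 : Matrix (Fin r) (Fin r) ℂ)).det *
          Matrix.trace ((((z - t i) ^ 2)⁻¹ • A i t) *
            (∑ k, (z - t k)⁻¹ • A k t - μ • (1 : Matrix (Fin r) (Fin r) ℂ))⁻¹) := by
  intro i t ht z hz μ hBu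
  have hz' : ∀ k : Fin N, z - t k ≠ 0 := fun k => sub_ne_zero.mpr (hz k)
  have hdet : IsUnit (∑ k, (z - t k)⁻¹ • A k t
      - μ • (1 : Matrix (Fin r) (Fin r) ℂ)).det :=
    (Matrix.isUnit_iff_isUnit_det _).mp hBu
  -- derivative of each summand
  have hterm : ∀ k : Fin N, HasFDerivAt (fun s : Fin N → ℂ => (z - s k)⁻¹ • A k s)
      ((z - t k)⁻¹ • fderiv ℂ (A k) t +
        ((-((z - t k) ^ 2)⁻¹) • (-(ContinuousLinearMap.proj (R := ℂ)
          (φ := fun _ : Fin N => ℂ) k))).smulRight (A k t)) t := by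
    intro k
    have hAk : HasFDerivAt (A k) (fderiv ℂ (A k) t) t :=
      ((hA k).differentiableAt (hUo.mem_nhds ht)).hasFDerivAt
    have hu : HasFDerivAt (fun s : Fin N → ℂ => z - s k)
        (-(ContinuousLinearMap.proj (R := ℂ) (φ := fun _ : Fin N => ℂ) k)) t := by
      have := (hasFDerivAt_const z t).sub
        (ContinuousLinearMap.proj (R := ℂ) (φ := fun _ : Fin N => ℂ) k).hasFDerivAt
      rw [zero_sub] at this; exact this
    have hinv : HasDerivAt (fun y : ℂ => y⁻¹) (-((z - t k) ^ 2)⁻¹) (z - t k) :=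
      hasDerivAt_inv (hz' k)
    exact (hinv.comp_hasFDerivAt t hu).smul hAk
  have hF : HasFDerivAt
      (fun s : Fin N → ℂ => ∑ k, (z - s k)⁻¹ • A k s - μ • (1 : Matrix (Fin r) (Fin r) ℂ))
      (∑ k, ((z - t k)⁻¹ • fderiv ℂ (A k) t +
        ((-((z - t k) ^ 2)⁻¹) • (-(ContinuousLinearMap.proj (R := ℂ)
          (φ := fun _ : Fin N => ℂ) k))).smulRight (A k t))) t :=
    (HasFDerivAt.fun_sum (fun k _ => hterm k)).sub_const _
  rw [fderiv_det_comp hF (Pi.single i 1)]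
  -- evaluate the derivative in direction `Pi.single i 1`
  have hval : (∑ k, ((z - t k)⁻¹ • fderiv ℂ (A k) t +
        ((-((z - t k) ^ 2)⁻¹) • (-(ContinuousLinearMap.proj (R := ℂ)
          (φ := fun _ : Fin N => ℂ) k))).smulRight (A k t))) (Pi.single i 1)
      = (∑ k, (z - t k)⁻¹ • fderiv ℂ (A k) t (Pi.single i 1))
        + ((z - t i) ^ 2)⁻¹ • A i t := by
    rw [ContinuousLinearMap.sum_apply]
    simp only [ContinuousLinearMap.add_apply, ContinuousLinearMap.smul_apply,
      ContinuousLinearMap.smulRight_apply, ContinuousLinearMap.neg_apply,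
      ContinuousLinearMap.proj_apply, smul_neg, neg_smul, neg_neg]
    rw [Finset.sum_add_distrib]
    congr 1
    rw [Finset.sum_eq_single i]
    · rw [Pi.single_eq_same, smul_assoc, one_smul]
    · intro k _ hk
      rw [Pi.single_eq_of_ne' (Ne.symm hk)]
      simp
    · intro h; exact absurd (Finset.mem_univ i) h
  rw [hval]
  -- the Schlesinger sum
  have key_coef : ∀ k : Fin N, k ≠ i →
      (z - t k)⁻¹ * (t k - t i)⁻¹ + (z - t i)⁻¹ * (t i - t k)⁻¹
        = (z - t i)⁻¹ * (z - t k)⁻¹ := by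
    intro k hk
    have h1 := hz' k
    have h2 := hz' i
    have h3 : t k - t i ≠ 0 := sub_ne_zero.mpr (hUd t ht k i hk)
    have h4 : t i - t k ≠ 0 := sub_ne_zero.mpr (hUd t ht i k hk.symm)
    field_simp
    ring
  have hS : (∑ k, (z - t k)⁻¹ • fderiv ℂ (A k) t (Pi.single i 1))
      = (z - t i)⁻¹ • ((∑ k, (z - t k)⁻¹ • A k t) * A i t
          - A i t * (∑ k, (z - t k)⁻¹ • A k t)) := by
    rw [← Finset.add_sum_erase _ _ (Finset.mem_univ i), (hSch i i t ht).2]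
    have step1 : ∀ k ∈ Finset.univ.erase i,
        (z - t k)⁻¹ • fderiv ℂ (A k) t (Pi.single i 1)
          = ((z - t k)⁻¹ * (t k - t i)⁻¹) • ⁅A k t, A i t⁆ := by
      intro k hk
      rw [(hSch k i t ht).1 (Finset.ne_of_mem_erase hk), smul_smul]
    rw [Finset.sum_congr rfl step1, smul_neg, Finset.smul_sum]
    have step2 : (∑ k, (z - t k)⁻¹ • A k t) * A i t
          - A i t * (∑ k, (z - t k)⁻¹ • A k t)
        = ∑ k, (z - t k)⁻¹ • ⁅A k t, A i t⁆ := by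
      rw [Finset.sum_mul, Finset.mul_sum, ← Finset.sum_sub_distrib]
      refine Finset.sum_congr rfl fun k _ => ?_
      rw [Ring.lie_def, smul_sub, smul_mul_assoc, mul_smul_comm]
    rw [step2, Finset.smul_sum,
      ← Finset.add_sum_erase _ (fun k => (z - t i)⁻¹ • (z - t k)⁻¹ • ⁅A k t, A i t⁆)
        (Finset.mem_univ i),
      Ring.lie_def, sub_self, smul_zero, smul_zero, zero_add, neg_add_eq_sub, ← Finset.sum_sub_distrib]
    refine Finset.sum_congr rfl fun k hk => ?_
    have hki : k ≠ i := Finset.ne_of_mem_erase hk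
    rw [show ⁅A k t, A i t⁆ = -⁅A i t, A k t⁆ by rw [Ring.lie_def, Ring.lie_def, neg_sub]]
    match_scalars
    linear_combination -key_coef k hki
  rw [hS]
  have hcomm : (∑ k, (z - t k)⁻¹ • A k t) * A i t
        - A i t * (∑ k, (z - t k)⁻¹ • A k t)
      = (∑ k, (z - t k)⁻¹ • A k t - μ • (1 : Matrix (Fin r) (Fin r) ℂ)) * A i t
        - A i t * (∑ k, (z - t k)⁻¹ • A k t - μ • (1 : Matrix (Fin r) (Fin r) ℂ)) := by
    rw [sub_mul, mul_sub, smul_mul_assoc, one_mul, mul_smul_comm, mul_one]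
    abel
  rw [hcomm]
  exact final_trace _ _ hdet _ _
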